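/- arXiv:2002.02179 — 4 statements merged into one kernel-verified Lean document; each statement's English description precedes it below -/
import Mathlib

section
/- Hadamard's inequality: for a real n × n matrix A, |det A| is at most the product over the rows of their Euclidean (ℓ²) norms. -/
/-- Hadamard's inequality: for a real `n × n` matrix `A`, `|det A|` is at most
the product over the rows of their Euclidean (ℓ²) norms. -/
theorem hadamard_inequality (n : ℕ) (A : Matrix (Fin n) (Fin n) ℝ) :
    |A.det| ≤ ∏ i, Real.sqrt (∑ j, (A i j) ^ 2) := by
  have _i : Fact (Module.finrank ℝ (EuclideanSpace ℝ (Fin n)) = n) :=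
    ⟨finrank_euclideanSpace_fin⟩
  set b : OrthonormalBasis (Fin n) ℝ (EuclideanSpace ℝ (Fin n)) :=
    EuclideanSpace.basisFun (Fin n) ℝ
  set o := b.toBasis.orientation
  set v : Fin n → EuclideanSpace ℝ (Fin n) := fun i => (WithLp.equiv 2 _).symm (A i) with hv
  have h := o.abs_volumeForm_apply_le v
  rw [o.volumeForm_robust b rfl] at h
  have hdet : b.toBasis.det v = A.det := by
    rw [Module.Basis.det_apply]
    have : b.toBasis.toMatrix v = A.transpose := by
      ext i j
      simp [Module.Basis.toMatrix_apply, hv, b, Matrix.transpose_apply,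
        EuclideanSpace.basisFun_repr]
    rw [this, Matrix.det_transpose]
  have hnorm : ∀ i, ‖v i‖ = Real.sqrt (∑ j, (A i j) ^ 2) := by
    intro i
    rw [EuclideanSpace.norm_eq]
    congr 1
    refine Finset.sum_congr rfl fun j _ => ?_
    simp [hv, sq_abs]
  rw [hdet] at h
  calc |A.det| ≤ ∏ i, ‖v i‖ := h
    _ = ∏ i, Real.sqrt (∑ j, (A i j) ^ 2) := Finset.prod_congr rfl fun i _ => hnorm i
end

section
/- A free product of two residually finite groups is residually finite. -/
/-- A group is residually finite if every non-identity element is detected by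
a homomorphism to some finite group. -/
def ResiduallyFinite (G : Type*) [Group G] : Prop :=
  ∀ g : G, g ≠ 1 → ∃ (H : Type) (_ : Group H) (_ : Finite H) (φ : G →* H),
    φ g ≠ 1

namespace FPRF

open Monoid List
open scoped Classical
set_option linter.unusedSectionVars false

variable {A B : Type} [Group A] [Group B]

/-- Nontriviality of a syllable. -/
def Ntriv : A ⊕ B → Prop := Sum.elim (· ≠ 1) (· ≠ 1)

/-- Alternation of sides. -/
def Alt (x y : A ⊕ B) : Prop := x.isLeft ≠ y.isLeft

/-- Invariant: alternating, nontrivial entries, bounded length. -/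
def Ok (L : ℕ) (l : List (A ⊕ B)) : Prop :=
  l.IsChain Alt ∧ (∀ x ∈ l, Ntriv x) ∧ l.length ≤ L

lemma ok_nil (L : ℕ) : Ok L ([] : List (A ⊕ B)) :=
  ⟨List.isChain_nil, by simp, by simp⟩

/-- The finite set of bounded reduced words. -/
abbrev X (A B : Type) [Group A] [Group B] (L : ℕ) := {l : List (A ⊕ B) // Ok L l}

instance (L : ℕ) [Finite A] [Finite B] : Finite (X A B L) := by
  haveI : Finite (Option (A ⊕ B)) := Finite.of_equiv ((A ⊕ B) ⊕ (PUnit : Type)) (Equiv.optionEquivSumPUnit _).symm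
  have hinj : Function.Injective
      (fun x : X A B L => (fun i : Fin (L + 1) => x.1[i.1]?)) := by
    rintro ⟨l₁, _, _, h₁⟩ ⟨l₂, _, _, h₂⟩ h
    ext1
    dsimp only at h
    apply List.ext_getElem?
    intro n
    by_cases hn : n < L + 1
    · exact congrFun h ⟨n, hn⟩
    · push_neg at hn
      rw [List.getElem?_eq_none (le_trans h₁ (by omega)),
        List.getElem?_eq_none (le_trans h₂ (by omega))]
  exact Finite.of_injective _ hinj

/-- Left action of `a : A` on bounded reduced words. -/
noncomputable def actL (L : ℕ) (a : A) (l : List (A ⊕ B)) : List (A ⊕ B) :=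
  match l with
  | Sum.inl a₁ :: t => if a * a₁ = 1 then t else Sum.inl (a * a₁) :: t
  | [] => if a = 1 ∨ L = 0 then [] else [Sum.inl a]
  | Sum.inr b :: t =>
      if a = 1 ∨ (Sum.inr b :: t).length = L then Sum.inr b :: t
      else Sum.inl a :: Sum.inr b :: t

@[simp] lemma actL_nil (L : ℕ) (a : A) :
    actL L a ([] : List (A ⊕ B)) = if a = 1 ∨ L = 0 then [] else [Sum.inl a] := rfl

@[simp] lemma actL_cons_inl (L : ℕ) (a a₁ : A) (t : List (A ⊕ B)) :
    actL L a (Sum.inl a₁ :: t) = if a * a₁ = 1 then t else Sum.inl (a * a₁) :: t := rfl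

@[simp] lemma actL_cons_inr (L : ℕ) (a : A) (b : B) (t : List (A ⊕ B)) :
    actL L a (Sum.inr b :: t) =
      if a = 1 ∨ (Sum.inr b :: t).length = L then Sum.inr b :: t
      else Sum.inl a :: Sum.inr b :: t := rfl

lemma ok_actL (L : ℕ) (a : A) {l : List (A ⊕ B)} (h : Ok L l) : Ok L (actL L a l) := by
  obtain ⟨hc, hn, hL⟩ := h
  rcases l with _ | ⟨x, t⟩
  · rw [actL_nil]
    split
    · exact ok_nil L
    · rename_i hg
      push_neg at hg
      exact ⟨by simp, by simp [Ntriv, hg.1], by simp; omega⟩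
  rcases x with a₁ | b
  · rw [actL_cons_inl]
    split
    · exact ⟨hc.tail, fun x hx => hn x (List.mem_cons_of_mem _ hx),
        le_trans (by simp) hL⟩
    · rename_i hne
      refine ⟨?_, ?_, by simpa using hL⟩
      · rw [List.isChain_cons] at hc ⊢
        exact ⟨fun y hy => by simpa [Alt] using hc.1 y hy, hc.2⟩
      · intro x hx
        rcases List.mem_cons.1 hx with rfl | hx
        · simpa [Ntriv] using hne
        · exact hn x (List.mem_cons_of_mem _ hx)
  · rw [actL_cons_inr]
    split
    · exact ⟨hc, hn, hL⟩
    · rename_i hg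
      push_neg at hg
      refine ⟨List.isChain_cons_cons.2 ⟨by simp [Alt], hc⟩, ?_, ?_⟩
      · intro x hx
        rcases List.mem_cons.1 hx with rfl | hx
        · simpa [Ntriv] using hg.1
        · exact hn x hx
      · have h2 := hg.2
        simp only [List.length_cons] at hL h2 ⊢
        omega

lemma actL_one (L : ℕ) {l : List (A ⊕ B)} (h : Ok L l) : actL L 1 l = l := by
  rcases l with _ | ⟨x, t⟩
  · simp
  rcases x with a₁ | b
  · have : a₁ ≠ 1 := by simpa [Ntriv] using h.2.1 (Sum.inl a₁) List.mem_cons_self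
    simp [this]
  · simp

lemma actL_mul (L : ℕ) (a a' : A) {l : List (A ⊕ B)} (h : Ok L l) :
    actL L a (actL L a' l) = actL L (a * a') l := by
  obtain ⟨hc, hn, hL⟩ := h
  rcases l with _ | ⟨x, t⟩
  · by_cases hL0 : L = 0
    · simp [hL0]
    by_cases ha' : a' = 1
    · simp [ha', hL0]
    rw [actL_nil, if_neg (by simp [ha', hL0])]
    by_cases haa : a * a' = 1
    · simp [haa, hL0]
    · simp [haa, hL0]
  rcases x with a₁ | b
  · -- l = inl a₁ :: t
    have htL : t.length < L := by
      simp only [List.length_cons] at hL; omega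
    by_cases h1 : a' * a₁ = 1
    · have key : a * a' * a₁ = a := by rw [mul_assoc, h1, mul_one]
      rw [actL_cons_inl, if_pos h1, actL_cons_inl, key]
      rcases t with _ | ⟨y, t'⟩
      · rw [actL_nil]
        simp [(show L ≠ 0 by omega)]
      rcases y with a₂ | b₂
      · exact absurd (List.isChain_cons_cons.1 hc).1 (by simp [Alt])
      · by_cases ha : a = 1
        · rw [actL_cons_inr, if_pos (Or.inl ha), if_pos ha]
        · rw [actL_cons_inr, if_neg (by push_neg; exact ⟨ha, by omega⟩), if_neg ha]
    · rw [actL_cons_inl, if_neg h1, actL_cons_inl, actL_cons_inl, ← mul_assoc]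
  · -- l = inr b :: t
    by_cases hlen : (Sum.inr b :: t : List (A ⊕ B)).length = L
    · rw [actL_cons_inr, if_pos (Or.inr hlen), actL_cons_inr, if_pos (Or.inr hlen),
        actL_cons_inr, if_pos (Or.inr hlen)]
    by_cases ha' : a' = 1
    · rw [actL_cons_inr, if_pos (Or.inl ha'), ha', mul_one]
    rw [actL_cons_inr, if_neg (by push_neg; exact ⟨ha', hlen⟩), actL_cons_inl]
    by_cases haa : a * a' = 1
    · rw [if_pos haa, actL_cons_inr, if_pos (Or.inl haa)]
    · rw [if_neg haa, actL_cons_inr, if_neg (by push_neg; exact ⟨haa, hlen⟩)]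

/-- Right action of `b : B` on bounded reduced words. -/
noncomputable def actR (L : ℕ) (b : B) (l : List (A ⊕ B)) : List (A ⊕ B) :=
  match l with
  | Sum.inr b₁ :: t => if b * b₁ = 1 then t else Sum.inr (b * b₁) :: t
  | [] => if b = 1 ∨ L = 0 then [] else [Sum.inr b]
  | Sum.inl a :: t =>
      if b = 1 ∨ (Sum.inl a :: t).length = L then Sum.inl a :: t
      else Sum.inr b :: Sum.inl a :: t

@[simp] lemma actR_nil (L : ℕ) (b : B) :
    actR L b ([] : List (A ⊕ B)) = if b = 1 ∨ L = 0 then [] else [Sum.inr b] := rfl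

@[simp] lemma actR_cons_inr (L : ℕ) (b b₁ : B) (t : List (A ⊕ B)) :
    actR L b (Sum.inr b₁ :: t) = if b * b₁ = 1 then t else Sum.inr (b * b₁) :: t := rfl

@[simp] lemma actR_cons_inl (L : ℕ) (b : B) (a : A) (t : List (A ⊕ B)) :
    actR L b (Sum.inl a :: t) =
      if b = 1 ∨ (Sum.inl a :: t).length = L then Sum.inl a :: t
      else Sum.inr b :: Sum.inl a :: t := rfl

lemma ok_actR (L : ℕ) (b : B) {l : List (A ⊕ B)} (h : Ok L l) : Ok L (actR L b l) := by
  obtain ⟨hc, hn, hL⟩ := h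
  rcases l with _ | ⟨x, t⟩
  · rw [actR_nil]
    split
    · exact ok_nil L
    · rename_i hg
      push_neg at hg
      exact ⟨by simp, by simp [Ntriv, hg.1], by simp; omega⟩
  rcases x with a | b₁
  · rw [actR_cons_inl]
    split
    · exact ⟨hc, hn, hL⟩
    · rename_i hg
      push_neg at hg
      refine ⟨List.isChain_cons_cons.2 ⟨by simp [Alt], hc⟩, ?_, ?_⟩
      · intro x hx
        rcases List.mem_cons.1 hx with rfl | hx
        · simpa [Ntriv] using hg.1
        · exact hn x hx
      · have h2 := hg.2
        simp only [List.length_cons] at hL h2 ⊢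
        omega
  · rw [actR_cons_inr]
    split
    · exact ⟨hc.tail, fun x hx => hn x (List.mem_cons_of_mem _ hx),
        le_trans (by simp) hL⟩
    · rename_i hne
      refine ⟨?_, ?_, by simpa using hL⟩
      · rw [List.isChain_cons] at hc ⊢
        exact ⟨fun y hy => by simpa [Alt] using hc.1 y hy, hc.2⟩
      · intro x hx
        rcases List.mem_cons.1 hx with rfl | hx
        · simpa [Ntriv] using hne
        · exact hn x (List.mem_cons_of_mem _ hx)

lemma actR_one (L : ℕ) {l : List (A ⊕ B)} (h : Ok L l) : actR L 1 l = l := by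
  rcases l with _ | ⟨x, t⟩
  · simp
  rcases x with a | b₁
  · simp
  · have : b₁ ≠ 1 := by simpa [Ntriv] using h.2.1 (Sum.inr b₁) List.mem_cons_self
    simp [this]

lemma actR_mul (L : ℕ) (b b' : B) {l : List (A ⊕ B)} (h : Ok L l) :
    actR L b (actR L b' l) = actR L (b * b') l := by
  obtain ⟨hc, hn, hL⟩ := h
  rcases l with _ | ⟨x, t⟩
  · by_cases hL0 : L = 0
    · simp [hL0]
    by_cases hb' : b' = 1
    · simp [hb', hL0]
    rw [actR_nil, if_neg (by simp [hb', hL0])]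
    by_cases hbb : b * b' = 1
    · simp [hbb, hL0]
    · simp [hbb, hL0]
  rcases x with a | b₁
  · -- l = inl a :: t
    by_cases hlen : (Sum.inl a :: t : List (A ⊕ B)).length = L
    · rw [actR_cons_inl, if_pos (Or.inr hlen), actR_cons_inl, if_pos (Or.inr hlen),
        actR_cons_inl, if_pos (Or.inr hlen)]
    by_cases hb' : b' = 1
    · rw [actR_cons_inl, if_pos (Or.inl hb'), hb', mul_one]
    rw [actR_cons_inl, if_neg (by push_neg; exact ⟨hb', hlen⟩), actR_cons_inr]
    by_cases hbb : b * b' = 1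
    · rw [if_pos hbb, actR_cons_inl, if_pos (Or.inl hbb)]
    · rw [if_neg hbb, actR_cons_inl, if_neg (by push_neg; exact ⟨hbb, hlen⟩)]
  · -- l = inr b₁ :: t
    have htL : t.length < L := by
      simp only [List.length_cons] at hL; omega
    by_cases h1 : b' * b₁ = 1
    · have key : b * b' * b₁ = b := by rw [mul_assoc, h1, mul_one]
      rw [actR_cons_inr, if_pos h1, actR_cons_inr, key]
      rcases t with _ | ⟨y, t'⟩
      · rw [actR_nil]
        simp [(show L ≠ 0 by omega)]
      rcases y with a₂ | b₂
      · by_cases hb : b = 1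
        · rw [actR_cons_inl, if_pos (Or.inl hb), if_pos hb]
        · rw [actR_cons_inl, if_neg (by push_neg; exact ⟨hb, by omega⟩), if_neg hb]
      · exact absurd (List.isChain_cons_cons.1 hc).1 (by simp [Alt])
    · rw [actR_cons_inr, if_neg h1, actR_cons_inr, actR_cons_inr, ← mul_assoc]

/-- The left action as permutations. -/
noncomputable def permL (L : ℕ) : A →* Equiv.Perm (X A B L) where
  toFun a :=
    { toFun := fun x => ⟨actL L a x.1, ok_actL L a x.2⟩
      invFun := fun x => ⟨actL L a⁻¹ x.1, ok_actL L a⁻¹ x.2⟩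
      left_inv := fun x => Subtype.ext (by
        show actL L a⁻¹ (actL L a x.1) = x.1
        rw [actL_mul L a⁻¹ a x.2, inv_mul_cancel, actL_one L x.2])
      right_inv := fun x => Subtype.ext (by
        show actL L a (actL L a⁻¹ x.1) = x.1
        rw [actL_mul L a a⁻¹ x.2, mul_inv_cancel, actL_one L x.2]) }
  map_one' := Equiv.ext fun x => Subtype.ext (actL_one L x.2)
  map_mul' a a' := Equiv.ext fun x => Subtype.ext (actL_mul L a a' x.2).symm

/-- The right action as permutations. -/
noncomputable def permR (L : ℕ) : B →* Equiv.Perm (X A B L) where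
  toFun b :=
    { toFun := fun x => ⟨actR L b x.1, ok_actR L b x.2⟩
      invFun := fun x => ⟨actR L b⁻¹ x.1, ok_actR L b⁻¹ x.2⟩
      left_inv := fun x => Subtype.ext (by
        show actR L b⁻¹ (actR L b x.1) = x.1
        rw [actR_mul L b⁻¹ b x.2, inv_mul_cancel, actR_one L x.2])
      right_inv := fun x => Subtype.ext (by
        show actR L b (actR L b⁻¹ x.1) = x.1
        rw [actR_mul L b b⁻¹ x.2, mul_inv_cancel, actR_one L x.2]) }
  map_one' := Equiv.ext fun x => Subtype.ext (actR_one L x.2)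
  map_mul' b b' := Equiv.ext fun x => Subtype.ext (actR_mul L b b' x.2).symm

/-- The combined homomorphism from the free product. -/
noncomputable def bigHom (L : ℕ) : Coprod A B →* Equiv.Perm (X A B L) :=
  Coprod.lift (permL L) (permR L)

section prodOf

variable {M N : Type} [Group M] [Group N]

/-- A syllable as element of the coproduct. -/
def emb : M ⊕ N → Coprod M N := Sum.elim (fun m => Coprod.inl m) (fun n => Coprod.inr n)

/-- The product of a list of syllables. -/
def prodOf (l : List (M ⊕ N)) : Coprod M N := (l.map emb).prod

@[simp] lemma prodOf_nil : prodOf ([] : List (M ⊕ N)) = 1 := rfl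

@[simp] lemma prodOf_cons (x : M ⊕ N) (l : List (M ⊕ N)) :
    prodOf (x :: l) = emb x * prodOf l := by
  simp [prodOf]

/-- Reduction step: multiplying a reduced word by one syllable on the left. -/
lemma cons_red (x : M ⊕ N) {l : List (M ⊕ N)} (hc : l.IsChain Alt)
    (hn : ∀ y ∈ l, Ntriv y) :
    ∃ l' : List (M ⊕ N), l'.IsChain Alt ∧ (∀ y ∈ l', Ntriv y) ∧
      prodOf l' = emb x * prodOf l := by
  rcases x with a | b
  · rcases l with _ | ⟨y, t⟩
    · by_cases ha : a = 1
      · exact ⟨[], by simp, by simp, by simp [ha, emb]⟩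
      · exact ⟨[Sum.inl a], by simp, by simp [Ntriv, ha], by simp⟩
    rcases y with a₁ | b₁
    · by_cases h1 : a * a₁ = 1
      · refine ⟨t, hc.tail, fun y hy => hn y (List.mem_cons_of_mem _ hy), ?_⟩
        have : emb (Sum.inl a : M ⊕ N) * emb (Sum.inl a₁) = 1 := by
          simp only [emb, Sum.elim_inl, ← map_mul, h1, map_one]
        rw [prodOf_cons, ← mul_assoc, this, one_mul]
      · refine ⟨Sum.inl (a * a₁) :: t, ?_, ?_, ?_⟩
        · rw [List.isChain_cons] at hc ⊢
          exact ⟨fun y hy => by simpa [Alt] using hc.1 y hy, hc.2⟩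
        · intro y hy
          rcases List.mem_cons.1 hy with rfl | hy
          · simpa [Ntriv] using h1
          · exact hn y (List.mem_cons_of_mem _ hy)
        · rw [prodOf_cons, prodOf_cons, ← mul_assoc]
          congr 1
          simp [emb, map_mul]
    · by_cases ha : a = 1
      · exact ⟨Sum.inr b₁ :: t, hc, hn, by simp [ha, emb]⟩
      · refine ⟨Sum.inl a :: Sum.inr b₁ :: t,
          List.isChain_cons_cons.2 ⟨by simp [Alt], hc⟩, ?_, rfl⟩
        intro y hy
        rcases List.mem_cons.1 hy with rfl | hy
        · simpa [Ntriv] using ha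
        · exact hn y hy
  · rcases l with _ | ⟨y, t⟩
    · by_cases hb : b = 1
      · exact ⟨[], by simp, by simp, by simp [hb, emb]⟩
      · exact ⟨[Sum.inr b], by simp, by simp [Ntriv, hb], by simp⟩
    rcases y with a₁ | b₁
    · by_cases hb : b = 1
      · exact ⟨Sum.inl a₁ :: t, hc, hn, by simp [hb, emb]⟩
      · refine ⟨Sum.inr b :: Sum.inl a₁ :: t,
          List.isChain_cons_cons.2 ⟨by simp [Alt], hc⟩, ?_, rfl⟩
        intro y hy
        rcases List.mem_cons.1 hy with rfl | hy
        · simpa [Ntriv] using hb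
        · exact hn y hy
    · by_cases h1 : b * b₁ = 1
      · refine ⟨t, hc.tail, fun y hy => hn y (List.mem_cons_of_mem _ hy), ?_⟩
        have : emb (Sum.inr b : M ⊕ N) * emb (Sum.inr b₁) = 1 := by
          simp only [emb, Sum.elim_inr, ← map_mul, h1, map_one]
        rw [prodOf_cons, ← mul_assoc, this, one_mul]
      · refine ⟨Sum.inr (b * b₁) :: t, ?_, ?_, ?_⟩
        · rw [List.isChain_cons] at hc ⊢
          exact ⟨fun y hy => by simpa [Alt] using hc.1 y hy, hc.2⟩
        · intro y hy
          rcases List.mem_cons.1 hy with rfl | hy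
          · simpa [Ntriv] using h1
          · exact hn y (List.mem_cons_of_mem _ hy)
        · rw [prodOf_cons, prodOf_cons, ← mul_assoc]
          congr 1
          simp [emb, map_mul]

/-- Every element of the coproduct is represented by a reduced word. -/
lemma exists_reduced (w : Coprod M N) :
    ∃ l : List (M ⊕ N), l.IsChain Alt ∧ (∀ y ∈ l, Ntriv y) ∧ prodOf l = w := by
  induction w using Coprod.induction_on with
  | inl m =>
      by_cases hm : m = 1
      · exact ⟨[], by simp, by simp, by simp [hm]⟩
      · exact ⟨[Sum.inl m], by simp, by simp [Ntriv, hm], by simp [emb]⟩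
  | inr n =>
      by_cases hn : n = 1
      · exact ⟨[], by simp, by simp, by simp [hn]⟩
      · exact ⟨[Sum.inr n], by simp, by simp [Ntriv, hn], by simp [emb]⟩
  | mul x y hx hy =>
      obtain ⟨l₁, hc₁, hn₁, rfl⟩ := hx
      obtain ⟨l₂, hc₂, hn₂, rfl⟩ := hy
      induction l₁ with
      | nil => exact ⟨l₂, hc₂, hn₂, by simp⟩
      | cons z t ih =>
          obtain ⟨m, hcm, hnm, hm⟩ := ih hc₁.tail
            (fun y hy => hn₁ y (List.mem_cons_of_mem _ hy))
          obtain ⟨l', hc', hn', hl'⟩ := cons_red z hcm hnm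
          exact ⟨l', hc', hn', by rw [hl', hm, prodOf_cons, mul_assoc]⟩

end prodOf

/-- The key computation: the image of a reduced word of length `≤ L` moves the empty word
to that word. -/
lemma bigHom_prodOf (L : ℕ) :
    ∀ (m : List (A ⊕ B)) (hc : m.IsChain Alt) (hn : ∀ x ∈ m, Ntriv x)
      (hL : m.length ≤ L),
      bigHom L (prodOf m) ⟨[], ok_nil L⟩ = ⟨m, hc, hn, hL⟩ := by
  intro m
  induction m with
  | nil => intro _ _ _; simp [bigHom]
  | cons x t ih =>
      intro hc hn hL
      have htc : t.IsChain Alt := hc.tail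
      have htn : ∀ y ∈ t, Ntriv y := fun y hy => hn y (List.mem_cons_of_mem _ hy)
      have htL : t.length ≤ L := le_trans (by simp) hL
      have htL' : t.length < L := by simp only [List.length_cons] at hL; omega
      rw [prodOf_cons, map_mul]
      have hstep := ih htc htn htL
      rw [Equiv.Perm.mul_apply, hstep]
      rcases x with a | b
      · have ha : a ≠ 1 := by simpa [Ntriv] using hn (Sum.inl a) List.mem_cons_self
        have : bigHom L (emb (Sum.inl a : A ⊕ B)) = permL L a := by
          simp [bigHom, emb, Coprod.lift_apply_inl]
        rw [this]
        ext1
        show actL L a t = Sum.inl a :: t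
        rcases t with _ | ⟨y, t'⟩
        · rw [actL_nil, if_neg (by push_neg; exact ⟨ha, by omega⟩)]
        rcases y with a₁ | b₁
        · exact absurd (List.isChain_cons_cons.1 hc).1 (by simp [Alt])
        · rw [actL_cons_inr, if_neg (by push_neg; exact ⟨ha, by omega⟩)]
      · have hb : b ≠ 1 := by simpa [Ntriv] using hn (Sum.inr b) List.mem_cons_self
        have : bigHom L (emb (Sum.inr b : A ⊕ B)) = permR L b := by
          simp [bigHom, emb, Coprod.lift_apply_inr]
        rw [this]
        ext1
        show actR L b t = Sum.inr b :: t
        rcases t with _ | ⟨y, t'⟩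
        · rw [actR_nil, if_neg (by push_neg; exact ⟨hb, by omega⟩)]
        rcases y with a₁ | b₁
        · rw [actR_cons_inl, if_neg (by push_neg; exact ⟨hb, by omega⟩)]
        · exact absurd (List.isChain_cons_cons.1 hc).1 (by simp [Alt])

/-- Separating a finite set of nontrivial elements by a single finite quotient. -/
lemma sep {G : Type} [Group G] (hG : ResiduallyFinite G) (S : Finset G)
    (hS : (1 : G) ∉ S) :
    ∃ (A : Type) (_ : Group A) (_ : Finite A) (φ : G →* A), ∀ g ∈ S, φ g ≠ 1 := by
  classical
  induction S using Finset.induction_on with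
  | empty => exact ⟨PUnit, inferInstance, inferInstance, 1, by simp⟩
  | @insert a S ha ih =>
      have h1S : (1 : G) ∉ S := fun h => hS (Finset.mem_insert_of_mem h)
      have ha1 : a ≠ 1 := fun h => hS (h ▸ Finset.mem_insert_self a S)
      obtain ⟨A₁, _, _, φ₁, hφ₁⟩ := hG a ha1
      obtain ⟨A₂, _, _, φ₂, hφ₂⟩ := ih h1S
      refine ⟨A₁ × A₂, inferInstance, inferInstance, φ₁.prod φ₂, ?_⟩
      intro g hg
      rcases Finset.mem_insert.1 hg with rfl | hg
      · intro h
        exact hφ₁ ((Prod.mk_eq_one.1 h).1)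
      · intro h
        exact hφ₂ g hg ((Prod.mk_eq_one.1 h).2)

end FPRF

/-- A free product of two residually finite groups is residually finite. -/
theorem freeProduct_residuallyFinite (G H : Type) [Group G] [Group H]
    (hG : ResiduallyFinite G) (hH : ResiduallyFinite H) :
    ResiduallyFinite (Monoid.Coprod G H) := by
  classical
  intro w hw
  obtain ⟨l, hc, hn, rfl⟩ := FPRF.exists_reduced w
  have hlne : l ≠ [] := by
    rintro rfl
    exact hw (by simp)
  have h1G : (1 : G) ∉ (l.filterMap Sum.getLeft?).toFinset := by
    simp only [List.mem_toFinset, List.mem_filterMap]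
    rintro ⟨x, hx, hx1⟩
    rw [Sum.getLeft?_eq_some_iff] at hx1
    subst hx1
    exact (hn _ hx) rfl
  have h1H : (1 : H) ∉ (l.filterMap Sum.getRight?).toFinset := by
    simp only [List.mem_toFinset, List.mem_filterMap]
    rintro ⟨x, hx, hx1⟩
    rw [Sum.getRight?_eq_some_iff] at hx1
    subst hx1
    exact (hn _ hx) rfl
  obtain ⟨A, _, _, φ, hφ⟩ := FPRF.sep hG _ h1G
  obtain ⟨B, _, _, ψ, hψ⟩ := FPRF.sep hH _ h1H
  set L := l.length with hLdef
  set l' : List (A ⊕ B) := l.map (Sum.map φ ψ) with hl'def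
  have hc' : l'.IsChain FPRF.Alt := by
    rw [hl'def, List.isChain_map]
    exact hc.imp fun hxy => by simpa [FPRF.Alt] using hxy
  have hn' : ∀ x ∈ l', FPRF.Ntriv x := by
    intro x hx
    rw [hl'def, List.mem_map] at hx
    obtain ⟨y, hy, rfl⟩ := hx
    rcases y with g | h
    · exact hφ g (by
        simp only [List.mem_toFinset, List.mem_filterMap]
        exact ⟨_, hy, rfl⟩)
    · exact hψ h (by
        simp only [List.mem_toFinset, List.mem_filterMap]
        exact ⟨_, hy, rfl⟩)
  have hL' : l'.length ≤ L := by simp [hl'def, hLdef]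
  refine ⟨Equiv.Perm (FPRF.X A B L), inferInstance, inferInstance,
    (FPRF.bigHom L).comp (Monoid.Coprod.map φ ψ), ?_⟩
  have hmap : Monoid.Coprod.map φ ψ (FPRF.prodOf l) = FPRF.prodOf l' := by
    rw [hl'def]
    simp only [FPRF.prodOf, map_list_prod, List.map_map]
    congr 1
    apply List.map_congr_left
    rintro (g | h) _ <;> rfl
  intro hone
  have h2 : FPRF.bigHom L (FPRF.prodOf l') = 1 := by
    rw [← hmap, ← MonoidHom.comp_apply]
    exact hone
  have h3 := congrArg
    (fun σ : Equiv.Perm (FPRF.X A B L) => (σ ⟨[], FPRF.ok_nil L⟩).1) h2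
  simp only [FPRF.bigHom_prodOf L l' hc' hn' hL', Equiv.Perm.coe_one, id_eq] at h3
  exact hlne (List.map_eq_nil_iff.1 h3)
end

section
/- Every finitely generated linear group over a field is residually finite (Malcev's theorem). -/
/-- ℤ is a Jacobson ring. -/
lemma Malcev.int_isJacobsonRing : IsJacobsonRing ℤ := by
  rw [isJacobsonRing_iff_prime_eq]
  intro P hP
  by_cases hPb : P = ⊥
  · subst hPb
    refine le_antisymm ?_ Ideal.le_jacobson
    intro x hx
    rw [Ideal.jacobson, Ideal.mem_sInf] at hx
    simp only [Ideal.mem_bot]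
    by_contra hx0
    obtain ⟨p, hple, hp⟩ := Nat.exists_infinite_primes (x.natAbs + 1)
    have hpZ : Prime (p : ℤ) := Int.prime_iff_natAbs_prime.mpr (by simpa using hp)
    have hmax : (Ideal.span {(p : ℤ)}).IsMaximal :=
      PrincipalIdealRing.isMaximal_of_irreducible hpZ.irreducible
    have hmem : x ∈ Ideal.span {(p : ℤ)} := hx ⟨bot_le, hmax⟩
    rw [Ideal.mem_span_singleton] at hmem
    have hle : (p : ℤ) ≤ |x| :=
      Int.le_of_dvd (abs_pos.mpr hx0) ((dvd_abs _ _).mpr hmem)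
    rw [Int.abs_eq_natAbs] at hle
    omega
  · haveI : P.IsMaximal := IsPrime.to_maximal_ideal hPb
    exact Ideal.jacobson_eq_self_of_isMaximal

/-- A field which is a finitely generated ℤ-algebra is finite. -/
lemma Malcev.finite_of_field (F : Type*) [Field F] (hft : Algebra.FiniteType ℤ F) :
    Finite F := by
  haveI : IsJacobsonRing ℤ := Malcev.int_isJacobsonRing
  haveI := hft
  haveI : Module.Finite ℤ F := finite_of_finite_type_of_isJacobsonRing ℤ F
  haveI : Algebra.IsIntegral ℤ F := Algebra.IsIntegral.of_finite ℤ F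
  set I : Ideal ℤ := Ideal.comap (algebraMap ℤ F) ⊥ with hI
  haveI : (⊥ : Ideal F).IsMaximal := Ideal.bot_isMaximal
  haveI hImax : I.IsMaximal := Ideal.isMaximal_comap_of_isIntegral_of_isMaximal ⊥
  have hInebot : I ≠ ⊥ := (Ideal.bot_lt_of_maximal I Int.not_isField).ne'
  obtain ⟨a, ha⟩ := (IsPrincipalIdealRing.principal I).principal
  rw [Ideal.submodule_span_eq] at ha
  have ha0 : a ≠ 0 := by
    rintro rfl
    exact hInebot (ha.trans (Ideal.span_singleton_eq_bot.mpr rfl))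
  haveI : NeZero a.natAbs := ⟨Int.natAbs_ne_zero.mpr ha0⟩
  haveI : Finite (ℤ ⧸ I) := by
    rw [ha]
    exact Finite.of_equiv _ (Int.quotientSpanEquivZMod a).symm.toEquiv
  letI : Algebra (ℤ ⧸ I) F :=
    (Ideal.Quotient.lift I (algebraMap ℤ F)
      (fun x hx => by rwa [hI, Ideal.mem_comap, Ideal.mem_bot] at hx)).toAlgebra
  haveI : IsScalarTower ℤ (ℤ ⧸ I) F :=
    IsScalarTower.of_algebraMap_eq' (RingHom.ext_int _ _)
  haveI : Module.Finite (ℤ ⧸ I) F := Module.Finite.of_restrictScalars_finite ℤ _ _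
  exact Module.finite_of_finite (ℤ ⧸ I)

/-- The quotient of a finitely generated ℤ-algebra by a maximal ideal is finite. -/
lemma Malcev.finite_quotient (R : Type*) [CommRing R] (hft : Algebra.FiniteType ℤ R)
    (m : Ideal R) (hm : m.IsMaximal) : Finite (R ⧸ m) := by
  haveI := hm
  letI : Field (R ⧸ m) := Ideal.Quotient.field m
  exact Malcev.finite_of_field (R ⧸ m)
    (Algebra.FiniteType.of_surjective (Ideal.Quotient.mk m).toIntAlgHom
      Ideal.Quotient.mk_surjective)

set_option maxHeartbeats 1000000 in
set_option synthInstance.maxHeartbeats 400000 in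
/-- Malcev's theorem: every finitely generated linear group over a field is
residually finite. -/
theorem malcev_linear_residuallyFinite (G : Type) [Group G] (hfg : Group.FG G)
    (k : Type) [Field k] (n : ℕ)
    (φ : G →* Matrix.GeneralLinearGroup (Fin n) k)
    (hφ : Function.Injective φ) :
    ResiduallyFinite G := by
  classical
  obtain ⟨S, hSc, hSf⟩ := Group.fg_iff.mp hfg
  -- The set of matrix entries of generators and their inverses
  set E : Set k := ⋃ s ∈ S,
      ((Set.range fun p : Fin n × Fin n =>
          ((φ s : Matrix (Fin n) (Fin n) k) p.1 p.2)) ∪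
       (Set.range fun p : Fin n × Fin n =>
          ((φ s⁻¹ : Matrix (Fin n) (Fin n) k) p.1 p.2))) with hE
  have hEfin : E.Finite :=
    hSf.biUnion fun _ _ => (Set.finite_range _).union (Set.finite_range _)
  set R : Subalgebra ℤ k := Algebra.adjoin ℤ E with hR
  have hRfg : R.FG := by
    rw [hR, ← hEfin.coe_toFinset]
    exact Subalgebra.fg_adjoin_finset _
  haveI hRft : Algebra.FiniteType ℤ R := (Subalgebra.fg_iff_finiteType R).mp hRfg
  -- All entries of all matrices in the image of φ lie in R
  have key : ∀ g : G, (∀ i j, ((φ g : Matrix (Fin n) (Fin n) k) i j) ∈ R) ∧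
      (∀ i j, ((φ g⁻¹ : Matrix (Fin n) (Fin n) k) i j) ∈ R) := by
    intro g
    have hg : g ∈ Subgroup.closure S := hSc.symm ▸ Subgroup.mem_top g
    induction hg using Subgroup.closure_induction with
    | mem x hx =>
        constructor
        · intro i j
          exact Algebra.subset_adjoin <|
            Set.mem_biUnion hx (Or.inl ⟨(i, j), rfl⟩)
        · intro i j
          exact Algebra.subset_adjoin <|
            Set.mem_biUnion hx (Or.inr ⟨(i, j), rfl⟩)
    | one =>
        constructor <;>
        · intro i j
          simp only [inv_one, map_one, Units.val_one, Matrix.one_apply]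
          split_ifs
          · exact one_mem R
          · exact zero_mem R
    | mul x y hx hy ihx ihy =>
        constructor
        · intro i j
          rw [map_mul, Units.val_mul, Matrix.mul_apply]
          exact Subalgebra.sum_mem R fun l _ => mul_mem (ihx.1 i l) (ihy.1 l j)
        · intro i j
          rw [mul_inv_rev, map_mul, Units.val_mul, Matrix.mul_apply]
          exact Subalgebra.sum_mem R fun l _ => mul_mem (ihy.2 i l) (ihx.2 l j)
    | inv x hx ihx =>
        exact ⟨ihx.2, by rw [inv_inv]; exact ihx.1⟩
  -- The matrix of g, with entries in R
  set N : G → Matrix (Fin n) (Fin n) R := fun g =>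
    fun i j => ⟨(φ g : Matrix (Fin n) (Fin n) k) i j, (key g).1 i j⟩ with hN
  set u : R →+* k := (Subalgebra.val R).toRingHom with hu
  have huinj : Function.Injective u := Subtype.val_injective
  have humap : ∀ g : G, u.mapMatrix (N g) = (φ g : Matrix (Fin n) (Fin n) k) := by
    intro g; ext i j; rfl
  have hmapinj : Function.Injective
      (u.mapMatrix : Matrix (Fin n) (Fin n) R →+* Matrix (Fin n) (Fin n) k) := by
    intro M M' h
    ext i j
    have h1 : (u.mapMatrix M) i j = (u.mapMatrix M') i j := by rw [h]
    simp only [RingHom.mapMatrix_apply, Matrix.map_apply] at h1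
    exact h1
  have hNone : N 1 = 1 := by
    apply hmapinj
    rw [humap, map_one, map_one, Units.val_one]
  have hNmul : ∀ g h : G, N (g * h) = N g * N h := by
    intro g h
    apply hmapinj
    rw [humap, map_mul, map_mul, humap, humap, Units.val_mul]
  -- Now detect a nontrivial element
  intro g hg
  have hφg : (φ g : Matrix (Fin n) (Fin n) k) ≠ 1 := by
    intro h
    exact hg (hφ (Units.ext (show ((φ g : Matrix (Fin n) (Fin n) k)) = ((φ 1 : Matrix (Fin n) (Fin n) k)) by rw [map_one, Units.val_one]; exact h)))
  obtain ⟨i, j, hij⟩ : ∃ i j, (φ g : Matrix (Fin n) (Fin n) k) i j ≠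
      (1 : Matrix (Fin n) (Fin n) k) i j := by
    by_contra h
    push_neg at h
    exact hφg (by ext i j; exact h i j)
  set r : R := N g i j - (1 : Matrix (Fin n) (Fin n) R) i j with hr
  have hr0 : r ≠ 0 := by
    intro h
    apply hij
    have : u r = 0 := by rw [h, map_zero]
    rw [hr, map_sub] at this
    have h1 : u ((1 : Matrix (Fin n) (Fin n) R) i j) =
        (1 : Matrix (Fin n) (Fin n) k) i j := by
      have := congrFun (congrFun (map_one
        (u.mapMatrix : Matrix (Fin n) (Fin n) R →+* Matrix (Fin n) (Fin n) k)) i) j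
      exact this
    rw [h1] at this
    have h2 : u (N g i j) = (φ g : Matrix (Fin n) (Fin n) k) i j := rfl
    rw [h2] at this
    exact sub_eq_zero.mp this
  -- Find a maximal ideal of R avoiding r
  haveI : IsJacobsonRing ℤ := Malcev.int_isJacobsonRing
  haveI : IsJacobsonRing R := isJacobsonRing_of_finiteType (A := ℤ)
  have hjac : Ideal.jacobson (⊥ : Ideal R) = ⊥ := by
    haveI : IsReduced (↥R) := inferInstance
    rw [← Ideal.radical_eq_jacobson]
    have h0 : (⊥ : Ideal ↥R).radical = nilradical ↥R := rfl
    rw [h0, nilradical_eq_zero, Ideal.zero_eq_bot]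
  obtain ⟨m, hm, hrm⟩ : ∃ m : Ideal R, m.IsMaximal ∧ r ∉ m := by
    by_contra h
    push_neg at h
    have : r ∈ Ideal.jacobson (⊥ : Ideal R) := by
      rw [Ideal.jacobson, Ideal.mem_sInf]
      rintro J ⟨-, hJ⟩
      exact h J hJ
    rw [hjac, Ideal.mem_bot] at this
    exact hr0 this
  haveI := hm
  haveI : Finite (R ⧸ m) := Malcev.finite_quotient R hRft m hm
  set ψ : R →+* R ⧸ m := Ideal.Quotient.mk m with hψ
  set M : G → Matrix (Fin n) (Fin n) (R ⧸ m) := fun x => ψ.mapMatrix (N x) with hM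
  have hMone : M 1 = 1 := by rw [hM]; simp only [hNone, map_one]
  have hMmul : ∀ a b : G, M (a * b) = M a * M b := by
    intro a b; rw [hM]; simp only [hNmul, map_mul]
  haveI : Finite (Matrix.GeneralLinearGroup (Fin n) (R ⧸ m)) :=
    Finite.of_injective (Units.val : _ → Matrix (Fin n) (Fin n) (R ⧸ m)) (fun _ _ h => Units.ext h)
  refine ⟨Matrix.GeneralLinearGroup (Fin n) (R ⧸ m), inferInstance, inferInstance,
    { toFun := fun x =>
        ⟨M x, M x⁻¹,
         by rw [← hMmul, mul_inv_cancel, hMone],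
         by rw [← hMmul, inv_mul_cancel, hMone]⟩,
      map_one' := Units.ext (by simpa using hMone),
      map_mul' := fun a b => Units.ext (by simpa using hMmul a b) }, ?_⟩
  intro h1
  have hval : M g = 1 := congrArg Units.val h1
  apply hrm
  rw [← Ideal.Quotient.eq_zero_iff_mem]
  have : ψ (N g i j) = (1 : Matrix (Fin n) (Fin n) (R ⧸ m)) i j := by
    rw [show ψ (N g i j) = M g i j from rfl, hval]
  have h1R : ψ ((1 : Matrix (Fin n) (Fin n) R) i j) =
      (1 : Matrix (Fin n) (Fin n) (R ⧸ m)) i j := by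
    have := congrFun (congrFun (map_one
      (ψ.mapMatrix : Matrix (Fin n) (Fin n) R →+* Matrix (Fin n) (Fin n) (R ⧸ m))) i) j
    exact this
  rw [hr, map_sub, this, h1R, sub_self]
end

section
/- A finitely presented residually finite group has solvable word problem. -/
/-- Evaluate a word in the generators (with signs) in a presented group. -/
def evalWord {m : ℕ} (rels : Set (FreeGroup (Fin m)))
    (w : List (Fin m × Bool)) : PresentedGroup rels :=
  (w.map (fun p => if p.2 then PresentedGroup.of p.1
    else (PresentedGroup.of p.1)⁻¹)).prod

set_option maxHeartbeats 1000000

namespace WPAux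
open Primrec

variable {m : ℕ}

theorem pr_and : Primrec₂ (· && ·) := by
  have h : Primrec fun p : Bool × Bool => bif p.1 then p.2 else false :=
    Primrec.cond Primrec.fst Primrec.snd (Primrec.const false)
  exact h.of_eq fun p => by obtain ⟨a, b⟩ := p; cases a <;> rfl

theorem pr_or : Primrec₂ (· || ·) := by
  have h : Primrec fun p : Bool × Bool => bif p.1 then true else p.2 :=
    Primrec.cond Primrec.fst (Primrec.const true) Primrec.snd
  exact h.of_eq fun p => by obtain ⟨a, b⟩ := p; cases a <;> rfl

variable {m : ℕ}

/-- inverse of a word -/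
def wInv (l : List (Fin m × Bool)) : List (Fin m × Bool) :=
  (l.map fun p => (p.1, !p.2)).reverse

theorem prim_wInv : Primrec (wInv (m := m)) :=
  Primrec.list_reverse.comp
    (Primrec.list_map .id ((Primrec.pair (fst.comp snd) (Primrec.not.comp (snd.comp snd)))))

def expandBlock (RL : List (List (Fin m × Bool))) (t : List (Fin m × Bool) × ℕ × Bool) :
    List (Fin m × Bool) :=
  t.1 ++ (cond t.2.2 (RL.getD t.2.1 []) (wInv (RL.getD t.2.1 []))) ++ wInv t.1

theorem prim_expandBlock (RL : List (List (Fin m × Bool))) : Primrec (expandBlock RL) := by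
  have hget : Primrec fun t : List (Fin m × Bool) × ℕ × Bool => RL.getD t.2.1 [] :=
    (Primrec.list_getD []).comp (.const RL) (fst.comp snd)
  exact Primrec.list_append.comp
    (Primrec.list_append.comp .fst
      (Primrec.cond (snd.comp snd) hget (prim_wInv.comp hget)))
    (prim_wInv.comp .fst)

def expandWord (RL : List (List (Fin m × Bool))) (l : List (List (Fin m × Bool) × ℕ × Bool)) :
    List (Fin m × Bool) :=
  (l.map (expandBlock RL)).flatten

theorem prim_expandWord (RL : List (List (Fin m × Bool))) : Primrec (expandWord RL) :=
  Primrec.list_flatten.comp (Primrec.list_map .id ((prim_expandBlock RL).comp snd))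

theorem reduce_eq_foldr (L : List (Fin m × Bool)) :
    FreeGroup.reduce L = L.foldr (fun x ih =>
      List.casesOn ih [x] fun hd tl => if x.1 = hd.1 ∧ x.2 = !hd.2 then tl else x :: hd :: tl)
      [] := by
  induction L with
  | nil => rfl
  | cons x L ih => rw [List.foldr_cons, ← ih, FreeGroup.reduce.cons]

theorem prim_reduce : Primrec (FreeGroup.reduce (α := Fin m)) := by
  have hstep : Primrec₂ (fun (_ : List (Fin m × Bool))
      (p : (Fin m × Bool) × List (Fin m × Bool)) =>
      (List.casesOn p.2 [p.1] fun hd tl =>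
        if p.1.1 = hd.1 ∧ p.1.2 = !hd.2 then tl else p.1 :: hd :: tl : List (Fin m × Bool))) := by
    have := Primrec.list_casesOn
      (f := fun q : List (Fin m × Bool) × ((Fin m × Bool) × List (Fin m × Bool)) => q.2.2)
      (g := fun q => [q.2.1])
      (h := fun q (p : (Fin m × Bool) × List (Fin m × Bool)) =>
        if q.2.1.1 = p.1.1 ∧ q.2.1.2 = !p.1.2 then p.2 else q.2.1 :: p.1 :: p.2)
      (snd.comp snd) (Primrec.list_cons.comp (fst.comp snd) (.const []))
      (Primrec.to₂ (Primrec.ite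
        (PrimrecPred.and
          (Primrec.eq.comp (fst.comp (fst.comp (snd.comp fst))) (fst.comp (fst.comp snd)))
          (Primrec.eq.comp (snd.comp (fst.comp (snd.comp fst)))
            (Primrec.not.comp (snd.comp (fst.comp snd)))))
        (snd.comp snd)
        (Primrec.list_cons.comp (fst.comp (snd.comp fst))
          (Primrec.list_cons.comp (fst.comp snd) (snd.comp snd)))))
    exact this.of_eq fun q => by rcases q with ⟨_, p, l⟩; cases l <;> rfl
  have h := Primrec.list_foldr (f := @id (List (Fin m × Bool)))
    (g := fun _ => ([] : List (Fin m × Bool)))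
    (h := fun (_ : List (Fin m × Bool)) (p : (Fin m × Bool) × List (Fin m × Bool)) =>
      (List.casesOn p.2 [p.1] fun hd tl =>
        if p.1.1 = hd.1 ∧ p.1.2 = !hd.2 then tl else p.1 :: hd :: tl : List (Fin m × Bool)))
    Primrec.id (.const []) hstep
  exact h.of_eq fun L => (reduce_eq_foldr L).symm

def fA (RL : List (List (Fin m × Bool))) (w : List (Fin m × Bool)) (n : ℕ) : Bool :=
  (Encodable.decode (α := List (List (Fin m × Bool) × ℕ × Bool)) n).casesOn false
    (fun l => decide (FreeGroup.reduce (expandWord RL l) = FreeGroup.reduce w))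

theorem comp_fA (RL : List (List (Fin m × Bool))) : Computable₂ (fA RL) := by
  have h : Primrec fun p : List (Fin m × Bool) × ℕ => fA RL p.1 p.2 := by
    have hg : Primrec fun q : (List (Fin m × Bool) × ℕ) × List (List (Fin m × Bool) × ℕ × Bool) =>
        decide (FreeGroup.reduce (expandWord RL q.2) = FreeGroup.reduce q.1.1) :=
      Primrec.eq.comp (prim_reduce.comp ((prim_expandWord RL).comp snd))
        (prim_reduce.comp (fst.comp fst)) |>.decide
    have hg2 : Primrec₂ (fun (p : List (Fin m × Bool) × ℕ)
        (l : List (List (Fin m × Bool) × ℕ × Bool)) =>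
        decide (FreeGroup.reduce (expandWord RL l) = FreeGroup.reduce p.1)) := Primrec.to₂ hg
    have ho : Primrec fun p : List (Fin m × Bool) × ℕ =>
        (Encodable.decode (α := List (List (Fin m × Bool) × ℕ × Bool)) p.2) :=
      (Primrec.decode (α := List (List (Fin m × Bool) × ℕ × Bool))).comp snd
    have key : Primrec fun p : List (Fin m × Bool) × ℕ =>
        (Option.casesOn (Encodable.decode (α := List (List (Fin m × Bool) × ℕ × Bool)) p.2)
          false
          (fun l => decide (FreeGroup.reduce (expandWord RL l) = FreeGroup.reduce p.1)) : Bool) :=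
      Primrec.option_casesOn ho (.const false) hg2
    exact key.of_eq fun p => rfl
  exact h.to₂.to_comp


def permChk (k : ℕ) (l : List ℕ) : Bool :=
  decide (l.length = k) &&
    (List.range k).foldr (fun x s => decide (l.idxOf x < l.length) && s) true

theorem prim_permChk : Primrec₂ (permChk) := by
  have hfold : Primrec fun a : ℕ × List ℕ =>
      (List.range a.1).foldr (fun x s => decide (a.2.idxOf x < a.2.length) && s) true := by
    have := Primrec.list_foldr (f := fun a : ℕ × List ℕ => List.range a.1)
      (g := fun _ => true)
      (h := fun (a : ℕ × List ℕ) (p : ℕ × Bool) =>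
        decide (a.2.idxOf p.1 < a.2.length) && p.2)
      (Primrec.list_range.comp fst) (.const true)
      (pr_and.comp
        (Primrec.nat_lt.comp (Primrec.list_idxOf.comp (fst.comp snd) (snd.comp fst))
          (Primrec.list_length.comp (snd.comp fst))).decide
        (snd.comp snd))
    exact this.of_eq fun a => rfl
  have key : Primrec fun a : ℕ × List ℕ => permChk a.1 a.2 :=
    pr_and.comp (Primrec.eq.comp (Primrec.list_length.comp snd) fst).decide hfold
  exact key

def stepB (l : List ℕ) (b : Bool) (x : ℕ) : ℕ := cond b (l.getD x 0) (l.idxOf x)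

def evalPt (ρ : List (List ℕ)) (u : List (Fin m × Bool)) (x : ℕ) : ℕ :=
  u.foldr (fun p y => stepB (ρ.getD p.1.val []) p.2 y) x

theorem prim_evalPt :
    Primrec fun a : List (List ℕ) × (List (Fin m × Bool) × ℕ) => evalPt a.1 a.2.1 a.2.2 := by
  have hh : Primrec₂ (fun (a : List (List ℕ) × (List (Fin m × Bool) × ℕ))
      (p : (Fin m × Bool) × ℕ) => stepB (a.1.getD p.1.1.val []) p.1.2 p.2) := by
    have hl : Primrec fun q :
        (List (List ℕ) × (List (Fin m × Bool) × ℕ)) × ((Fin m × Bool) × ℕ) =>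
        q.1.1.getD q.2.1.1.val [] :=
      (Primrec.list_getD []).comp (fst.comp fst)
        (Primrec.fin_val.comp (fst.comp (fst.comp snd)))
    have hx : Primrec fun q :
        (List (List ℕ) × (List (Fin m × Bool) × ℕ)) × ((Fin m × Bool) × ℕ) => q.2.2 :=
      snd.comp snd
    exact Primrec.cond (snd.comp (fst.comp snd))
      ((Primrec.list_getD 0).comp hl hx)
      (Primrec.list_idxOf.comp hx hl)
  have := Primrec.list_foldr (f := fun a : List (List ℕ) × (List (Fin m × Bool) × ℕ) => a.2.1)
    (g := fun a : List (List ℕ) × (List (Fin m × Bool) × ℕ) => a.2.2)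
    (h := fun (a : List (List ℕ) × (List (Fin m × Bool) × ℕ))
      (p : (Fin m × Bool) × ℕ) => stepB (a.1.getD p.1.1.val []) p.1.2 p.2)
    (fst.comp snd) (snd.comp snd) hh
  exact this.of_eq fun a => rfl

def fB (RL : List (List (Fin m × Bool))) (w : List (Fin m × Bool)) (n : ℕ) : Bool :=
  (Encodable.decode (α := ℕ × List (List ℕ)) n).casesOn false fun q =>
    decide (q.2.length = m) &&
    (q.2.foldr (fun l s => permChk q.1 l && s) true) &&
    (RL.foldr (fun r s =>
      ((List.range q.1).foldr (fun x s' => decide (evalPt q.2 r x = x) && s') true) && s) true) &&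
    ((List.range q.1).foldr (fun x s => (!decide (evalPt q.2 w x = x)) || s) false)

theorem comp_fB (RL : List (List (Fin m × Bool))) : Computable₂ (fB RL) := by
  have hc1 : Primrec fun a : ((List (Fin m × Bool) × ℕ) × (ℕ × List (List ℕ))) => decide (a.2.2.length = m) :=
    Primrec.eq.comp (Primrec.list_length.comp (snd.comp snd)) (.const m) |>.decide
  have hc2 : Primrec fun a : ((List (Fin m × Bool) × ℕ) × (ℕ × List (List ℕ))) => a.2.2.foldr (fun l s => permChk a.2.1 l && s) true := by
    have := Primrec.list_foldr (f := fun a : ((List (Fin m × Bool) × ℕ) × (ℕ × List (List ℕ))) => a.2.2) (g := fun _ : ((List (Fin m × Bool) × ℕ) × (ℕ × List (List ℕ))) => true)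
      (h := fun (a : ((List (Fin m × Bool) × ℕ) × (ℕ × List (List ℕ)))) (p : List ℕ × Bool) => permChk a.2.1 p.1 && p.2)
      (snd.comp snd) (.const true)
      (pr_and.comp (prim_permChk.comp (fst.comp (snd.comp fst)) (fst.comp snd))
        (snd.comp snd))
    exact this.of_eq fun a => rfl
  have hinner : Primrec₂ (fun (a : ((List (Fin m × Bool) × ℕ) × (ℕ × List (List ℕ)))) (r : List (Fin m × Bool)) =>
      (List.range a.2.1).foldr (fun x s' => decide (evalPt a.2.2 r x = x) && s') true) := by
    have hev : Primrec fun q : (((List (Fin m × Bool) × ℕ) × (ℕ × List (List ℕ))) × List (Fin m × Bool)) × (ℕ × Bool) =>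
        evalPt q.1.1.2.2 q.1.2 q.2.1 :=
      prim_evalPt.comp (Primrec.pair (snd.comp (snd.comp (fst.comp fst)))
        (Primrec.pair (snd.comp fst) (fst.comp snd)))
    have := Primrec.list_foldr (f := fun b : ((List (Fin m × Bool) × ℕ) × (ℕ × List (List ℕ))) × List (Fin m × Bool) => List.range b.1.2.1)
      (g := fun _ : ((List (Fin m × Bool) × ℕ) × (ℕ × List (List ℕ))) × List (Fin m × Bool) => true)
      (h := fun (b : ((List (Fin m × Bool) × ℕ) × (ℕ × List (List ℕ))) × List (Fin m × Bool)) (p : ℕ × Bool) =>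
        decide (evalPt b.1.2.2 b.2 p.1 = p.1) && p.2)
      (Primrec.list_range.comp (fst.comp (snd.comp fst))) (.const true)
      (pr_and.comp (Primrec.eq.comp hev (fst.comp snd)).decide (snd.comp snd))
    exact this.of_eq fun a => rfl
  have hc3 : Primrec fun a : ((List (Fin m × Bool) × ℕ) × (ℕ × List (List ℕ))) => RL.foldr (fun r s =>
      ((List.range a.2.1).foldr (fun x s' => decide (evalPt a.2.2 r x = x) && s') true) && s)
      true := by
    have := Primrec.list_foldr (f := fun _ : ((List (Fin m × Bool) × ℕ) × (ℕ × List (List ℕ))) => RL) (g := fun _ : ((List (Fin m × Bool) × ℕ) × (ℕ × List (List ℕ))) => true)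
      (h := fun (a : ((List (Fin m × Bool) × ℕ) × (ℕ × List (List ℕ)))) (p : List (Fin m × Bool) × Bool) =>
        ((List.range a.2.1).foldr (fun x s' => decide (evalPt a.2.2 p.1 x = x) && s') true)
          && p.2)
      (.const RL) (.const true)
      (pr_and.comp (hinner.comp fst (fst.comp snd)) (snd.comp snd))
    exact this.of_eq fun a => rfl
  have hc4 : Primrec fun a : ((List (Fin m × Bool) × ℕ) × (ℕ × List (List ℕ))) =>
      (List.range a.2.1).foldr (fun x s => (!decide (evalPt a.2.2 a.1.1 x = x)) || s) false := by
    have hev : Primrec fun q : ((List (Fin m × Bool) × ℕ) × (ℕ × List (List ℕ))) × (ℕ × Bool) => evalPt q.1.2.2 q.1.1.1 q.2.1 :=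
      prim_evalPt.comp (Primrec.pair (snd.comp (snd.comp fst))
        (Primrec.pair (fst.comp (fst.comp fst)) (fst.comp snd)))
    have := Primrec.list_foldr (f := fun a : ((List (Fin m × Bool) × ℕ) × (ℕ × List (List ℕ))) => List.range a.2.1)
      (g := fun _ : ((List (Fin m × Bool) × ℕ) × (ℕ × List (List ℕ))) => false)
      (h := fun (a : ((List (Fin m × Bool) × ℕ) × (ℕ × List (List ℕ)))) (p : ℕ × Bool) =>
        (!decide (evalPt a.2.2 a.1.1 p.1 = p.1)) || p.2)
      (Primrec.list_range.comp (fst.comp snd)) (.const false)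
      (pr_or.comp (Primrec.not.comp (Primrec.eq.comp hev (fst.comp snd)).decide) (snd.comp snd))
    exact this.of_eq fun a => rfl
  have hg2 : Primrec₂ (fun (p : List (Fin m × Bool) × ℕ) (q : ℕ × List (List ℕ)) =>
      (decide (q.2.length = m) &&
      (q.2.foldr (fun l s => permChk q.1 l && s) true) &&
      (RL.foldr (fun r s =>
        ((List.range q.1).foldr (fun x s' => decide (evalPt q.2 r x = x) && s') true) && s) true) &&
      ((List.range q.1).foldr (fun x s => (!decide (evalPt q.2 p.1 x = x)) || s) false))) := by
    have : Primrec fun a : ((List (Fin m × Bool) × ℕ) × (ℕ × List (List ℕ))) =>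
        (decide (a.2.2.length = m) &&
        (a.2.2.foldr (fun l s => permChk a.2.1 l && s) true) &&
        (RL.foldr (fun r s =>
          ((List.range a.2.1).foldr (fun x s' => decide (evalPt a.2.2 r x = x) && s') true) && s)
          true) &&
        ((List.range a.2.1).foldr (fun x s => (!decide (evalPt a.2.2 a.1.1 x = x)) || s) false)) :=
      pr_and.comp (pr_and.comp (pr_and.comp hc1 hc2) hc3) hc4
    exact this
  have ho : Primrec fun p : List (Fin m × Bool) × ℕ =>
      (Encodable.decode (α := ℕ × List (List ℕ)) p.2) :=
    (Primrec.decode (α := ℕ × List (List ℕ))).comp snd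
  have key : Primrec fun p : List (Fin m × Bool) × ℕ =>
      (Option.casesOn (Encodable.decode (α := ℕ × List (List ℕ)) p.2) false
        (fun q =>
          decide (q.2.length = m) &&
          (q.2.foldr (fun l s => permChk q.1 l && s) true) &&
          (RL.foldr (fun r s =>
            ((List.range q.1).foldr (fun x s' => decide (evalPt q.2 r x = x) && s') true) && s)
            true) &&
          ((List.range q.1).foldr (fun x s => (!decide (evalPt q.2 p.1 x = x)) || s) false)) :
        Bool) :=
    Primrec.option_casesOn ho (.const false) hg2
  have h : Primrec fun p : List (Fin m × Bool) × ℕ => fB RL p.1 p.2 := key.of_eq fun p => rfl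
  exact h.to₂.to_comp


theorem mk_wInv (l : List (Fin m × Bool)) : FreeGroup.mk (wInv l) = (FreeGroup.mk l)⁻¹ := by
  rw [FreeGroup.inv_mk]
  rfl

theorem mk_flatten (L : List (List (Fin m × Bool))) :
    FreeGroup.mk L.flatten = (L.map FreeGroup.mk).prod := by
  induction L with
  | nil => simp [← FreeGroup.one_eq_mk]
  | cons a L ih => simp [← FreeGroup.mul_mk, ih]

theorem hom_mk_word {G : Type*} [Group G] (φ : FreeGroup (Fin m) →* G)
    (u : List (Fin m × Bool)) :
    φ (FreeGroup.mk u) =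
      (u.map fun p => if p.2 then φ (FreeGroup.of p.1) else (φ (FreeGroup.of p.1))⁻¹).prod := by
  induction u with
  | nil => simp [← FreeGroup.one_eq_mk]
  | cons p u ih =>
    have h1 : FreeGroup.mk (p :: u) = FreeGroup.mk [p] * FreeGroup.mk u := by
      rw [FreeGroup.mul_mk]; rfl
    rw [h1, map_mul, ih, List.map_cons, List.prod_cons]
    congr 1
    obtain ⟨a, b⟩ := p
    cases b
    · have h2 : ([(a, false)] : List (Fin m × Bool)) = FreeGroup.invRev [(a, true)] := by
        simp [FreeGroup.invRev]
      rw [h2, ← FreeGroup.inv_mk, map_inv]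
      rfl
    · rfl

theorem evalWord_eq (rels : Set (FreeGroup (Fin m))) (u : List (Fin m × Bool)) :
    evalWord rels u = PresentedGroup.mk rels (FreeGroup.mk u) := by
  rw [hom_mk_word (PresentedGroup.mk rels) u]
  rfl

theorem evalWord_eq_one_iff (rels : Set (FreeGroup (Fin m))) (u : List (Fin m × Bool)) :
    evalWord rels u = 1 ↔ FreeGroup.mk u ∈ Subgroup.normalClosure rels := by
  rw [evalWord_eq]
  exact QuotientGroup.eq_one_iff _

section Aside

variable (rels : Set (FreeGroup (Fin m))) (hrels : rels.Finite)

/-- canonical list of relator words -/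
noncomputable def RLof : List (List (Fin m × Bool)) :=
  hrels.toFinset.toList.map FreeGroup.toWord

theorem mem_RLof {u : List (Fin m × Bool)} (hu : u ∈ RLof rels hrels) :
    ∃ r ∈ rels, FreeGroup.toWord r = u := by
  obtain ⟨r, hr, rfl⟩ := List.mem_map.1 hu
  exact ⟨r, (hrels.mem_toFinset).1 (Finset.mem_toList.1 hr), rfl⟩

theorem RLof_mem {r : FreeGroup (Fin m)} (hr : r ∈ rels) :
    ∃ i, i < (RLof rels hrels).length ∧ (RLof rels hrels).getD i [] = FreeGroup.toWord r := by
  have hmem : FreeGroup.toWord r ∈ RLof rels hrels :=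
    List.mem_map.2 ⟨r, Finset.mem_toList.2 ((hrels.mem_toFinset).2 hr), rfl⟩
  obtain ⟨i, hi, he⟩ := List.mem_iff_getElem.1 hmem
  exact ⟨i, hi, by rw [List.getD_eq_getElem _ _ hi, he]⟩

theorem toWord_mem_RLof {r : FreeGroup (Fin m)} (hr : r ∈ rels) :
    FreeGroup.toWord r ∈ RLof rels hrels :=
  List.mem_map.2 ⟨r, Finset.mem_toList.2 ((hrels.mem_toFinset).2 hr), rfl⟩

theorem mk_expandBlock (RL : List (List (Fin m × Bool))) (t : List (Fin m × Bool) × ℕ × Bool) :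
    FreeGroup.mk (expandBlock RL t) =
      FreeGroup.mk t.1 *
        (cond t.2.2 (FreeGroup.mk (RL.getD t.2.1 [])) (FreeGroup.mk (RL.getD t.2.1 []))⁻¹) *
        (FreeGroup.mk t.1)⁻¹ := by
  obtain ⟨c, i, b⟩ := t
  cases b <;> simp [expandBlock, ← FreeGroup.mul_mk, mk_wInv, mul_assoc]

theorem mk_expandWord (RL : List (List (Fin m × Bool))) (l : List (List (Fin m × Bool) × ℕ × Bool)) :
    FreeGroup.mk (expandWord RL l) = (l.map fun t => FreeGroup.mk (expandBlock RL t)).prod := by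
  rw [expandWord, mk_flatten, List.map_map]
  rfl

theorem block_mem (t : List (Fin m × Bool) × ℕ × Bool) :
    FreeGroup.mk (expandBlock (RLof rels hrels) t) ∈ Subgroup.normalClosure rels := by
  haveI : (Subgroup.normalClosure rels).Normal := Subgroup.normalClosure_normal
  rw [mk_expandBlock]
  by_cases hi : t.2.1 < (RLof rels hrels).length
  · have hmem : (RLof rels hrels).getD t.2.1 [] ∈ RLof rels hrels := by
      rw [List.getD_eq_getElem _ _ hi]
      exact List.getElem_mem _
    obtain ⟨r, hr, hru⟩ := mem_RLof rels hrels hmem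
    have hmk : FreeGroup.mk ((RLof rels hrels).getD t.2.1 []) = r := by
      rw [← hru]; exact FreeGroup.mk_toWord
    have hrin : r ∈ Subgroup.normalClosure rels := Subgroup.subset_normalClosure hr
    have hcond : (cond t.2.2 (FreeGroup.mk ((RLof rels hrels).getD t.2.1 []))
        (FreeGroup.mk ((RLof rels hrels).getD t.2.1 []))⁻¹) ∈ Subgroup.normalClosure rels := by
      cases t.2.2
      · rw [hmk]; exact inv_mem hrin
      · rw [hmk]; exact hrin
    exact Subgroup.Normal.conj_mem ‹_› _ hcond _
  · rw [List.getD_eq_default _ _ (le_of_not_gt hi)]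
    have : (cond t.2.2 (FreeGroup.mk ([] : List (Fin m × Bool)))
        (FreeGroup.mk ([] : List (Fin m × Bool)))⁻¹) = 1 := by
      cases t.2.2 <;> simp [← FreeGroup.one_eq_mk]
    rw [this, mul_one, mul_inv_cancel]
    exact (Subgroup.normalClosure rels).one_mem

/-- flip a block (for inverses) -/
def flipB (t : List (Fin m × Bool) × ℕ × Bool) : List (Fin m × Bool) × ℕ × Bool :=
  (t.1, t.2.1, !t.2.2)

theorem mk_expandBlock_flip (RL : List (List (Fin m × Bool)))
    (t : List (Fin m × Bool) × ℕ × Bool) :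
    FreeGroup.mk (expandBlock RL (flipB t)) = (FreeGroup.mk (expandBlock RL t))⁻¹ := by
  rw [mk_expandBlock, mk_expandBlock]
  obtain ⟨c, i, b⟩ := t
  cases b <;>
    simp only [flipB, Bool.not_true, Bool.not_false, cond_true, cond_false] <;> group

theorem expandWord_append (RL : List (List (Fin m × Bool)))
    (l₁ l₂ : List (List (Fin m × Bool) × ℕ × Bool)) :
    expandWord RL (l₁ ++ l₂) = expandWord RL l₁ ++ expandWord RL l₂ := by
  simp [expandWord]

theorem expandWord_cons (RL : List (List (Fin m × Bool)))
    (t : List (Fin m × Bool) × ℕ × Bool) (l : List (List (Fin m × Bool) × ℕ × Bool)) :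
    expandWord RL (t :: l) = expandBlock RL t ++ expandWord RL l := by
  simp [expandWord]

theorem expandWord_singleton (RL : List (List (Fin m × Bool)))
    (t : List (Fin m × Bool) × ℕ × Bool) :
    expandWord RL [t] = expandBlock RL t := by
  simp [expandWord]

theorem mk_expandWord_revflip (RL : List (List (Fin m × Bool)))
    (l : List (List (Fin m × Bool) × ℕ × Bool)) :
    FreeGroup.mk (expandWord RL ((l.map flipB).reverse)) = (FreeGroup.mk (expandWord RL l))⁻¹ := by
  induction l with
  | nil => simp [expandWord, ← FreeGroup.one_eq_mk]
  | cons t l ih =>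
    rw [List.map_cons, List.reverse_cons, expandWord_append, ← FreeGroup.mul_mk,
      expandWord_singleton, ih, mk_expandBlock_flip, ← mul_inv_rev,
      expandWord_cons, ← FreeGroup.mul_mk]

theorem exists_expand_of_mem {g : FreeGroup (Fin m)} (hg : g ∈ Subgroup.normalClosure rels) :
    ∃ l, FreeGroup.mk (expandWord (RLof rels hrels) l) = g := by
  refine Subgroup.closure_induction ?_ ?_ ?_ ?_ hg
  · intro x hx
    obtain ⟨r, hr, hconj⟩ := Group.mem_conjugatesOfSet_iff.1 hx
    obtain ⟨c, hc⟩ := isConj_iff.1 hconj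
    obtain ⟨i, hi, hie⟩ := RLof_mem rels hrels hr
    refine ⟨[(FreeGroup.toWord c, i, true)], ?_⟩
    rw [mk_expandWord]
    simp only [List.map_cons, List.map_nil, List.prod_cons, List.prod_nil, mul_one]
    rw [mk_expandBlock]
    simp only [cond_true, hie]
    rw [FreeGroup.mk_toWord, FreeGroup.mk_toWord]
    exact hc
  · exact ⟨[], by rw [mk_expandWord]; simp⟩
  · rintro x y - - ⟨lx, hx⟩ ⟨ly, hy⟩
    refine ⟨lx ++ ly, ?_⟩
    rw [mk_expandWord] at *
    rw [List.map_append, List.prod_append, hx, hy]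
  · rintro x - ⟨lx, hx⟩
    exact ⟨(lx.map flipB).reverse, by rw [mk_expandWord_revflip, hx]⟩


theorem sideA (w : List (Fin m × Bool)) :
    evalWord rels w = 1 ↔ ∃ n, fA (RLof rels hrels) w n = true := by
  rw [evalWord_eq_one_iff]
  constructor
  · intro h
    obtain ⟨l, hl⟩ := exists_expand_of_mem rels hrels h
    refine ⟨Encodable.encode l, ?_⟩
    rw [fA, Encodable.encodek]
    show decide _ = true
    rw [decide_eq_true_eq]
    have h2 := congrArg FreeGroup.toWord hl
    rwa [FreeGroup.toWord_mk, FreeGroup.toWord_mk] at h2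
  · rintro ⟨n, hn⟩
    rw [fA] at hn
    rcases hd : (Encodable.decode (α := List (List (Fin m × Bool) × ℕ × Bool)) n) with - | l
    · rw [hd] at hn; simp at hn
    rw [hd] at hn
    have h2 : FreeGroup.reduce (expandWord (RLof rels hrels) l) = FreeGroup.reduce w :=
      of_decide_eq_true hn
    have hmk : FreeGroup.mk (expandWord (RLof rels hrels) l) = FreeGroup.mk w := by
      rw [← FreeGroup.reduce.self (L := expandWord (RLof rels hrels) l), h2,
        FreeGroup.reduce.self]
    rw [← hmk, mk_expandWord]
    refine list_prod_mem ?_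
    intro x hx
    obtain ⟨t, -, rfl⟩ := List.mem_map.1 hx
    exact block_mem rels hrels t

end Aside


theorem foldr_all_iff {β : Type*} (f : β → Bool) (L : List β) :
    (L.foldr (fun x s => f x && s) true = true) ↔ ∀ x ∈ L, f x = true := by
  induction L with
  | nil => simp
  | cons a L ih => simp [Bool.and_eq_true, ih]

theorem foldr_any_iff {β : Type*} (f : β → Bool) (L : List β) :
    (L.foldr (fun x s => f x || s) false = true) ↔ ∃ x ∈ L, f x = true := by
  induction L with
  | nil => simp
  | cons a L ih => simp [Bool.or_eq_true, ih]

theorem permChk_iff (k : ℕ) (l : List ℕ) :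
    permChk k l = true ↔ l.Perm (List.range k) := by
  rw [permChk, Bool.and_eq_true, decide_eq_true_eq,
    foldr_all_iff (fun x => decide (l.idxOf x < l.length))]
  constructor
  · rintro ⟨hlen, hall⟩
    have hsub : List.range k ⊆ l := fun x hx =>
      List.idxOf_lt_length_iff.1 (of_decide_eq_true (hall x hx))
    have hsp := List.subperm_of_subset (List.nodup_range) hsub
    exact (hsp.perm_of_length_le (by simp [hlen])).symm
  · intro hp
    refine ⟨by simpa using hp.length_eq, fun x hx => ?_⟩
    exact decide_eq_true (List.idxOf_lt_length_iff.2 ((hp.mem_iff).2 hx))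

theorem indexOf_getElem_nodup {l : List ℕ} (h : l.Nodup) {j : ℕ} (hj : j < l.length) :
    List.idxOf l[j] l = j := by
  have hmem : l[j] ∈ l := List.getElem_mem _
  have hlt : List.idxOf l[j] l < l.length := List.idxOf_lt_length_iff.2 hmem
  have hget := List.idxOf_get hlt
  have hinj := List.nodup_iff_injective_get.1 h
  have := hinj (a₁ := ⟨_, hlt⟩) (a₂ := ⟨j, hj⟩) (by rw [hget]; simp [List.get_eq_getElem])
  exact congrArg Fin.val this

section Canon

variable {k : ℕ} {σ : Fin m → Equiv.Perm (Fin k)} {ρ : List (List ℕ)}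

variable (hcan : ∀ i : Fin m, ρ.getD i.val [] = (List.finRange k).map (fun x => ((σ i x : ℕ))))
include hcan

theorem canon_length (i : Fin m) : (ρ.getD i.val []).length = k := by
  rw [hcan]; simp

theorem canon_nodup (i : Fin m) : (ρ.getD i.val []).Nodup := by
  rw [hcan]
  exact (List.nodup_finRange k).map fun a b hab => (σ i).injective (Fin.val_injective hab)

theorem canon_getD (i : Fin m) (x : Fin k) :
    (ρ.getD i.val []).getD x.val 0 = ((σ i x : ℕ)) := by
  rw [hcan i, List.getD_eq_getElem _ _ (by simpa using x.isLt)]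
  simp [List.getElem_finRange]

theorem canon_indexOf (i : Fin m) (y : Fin k) :
    List.idxOf (y : ℕ) (ρ.getD i.val []) = (((σ i)⁻¹ y : Fin k) : ℕ) := by
  set z : Fin k := (σ i)⁻¹ y with hz
  have hzy : σ i z = y := (σ i).apply_symm_apply y
  have hzl : (z : ℕ) < (ρ.getD i.val []).length := by rw [canon_length hcan]; exact z.isLt
  have hget : (ρ.getD i.val [])[(z : ℕ)] = (y : ℕ) := by
    have h1 := canon_getD hcan i z
    rw [List.getD_eq_getElem _ _ hzl] at h1
    rw [h1, hzy]
  rw [← hget]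
  exact indexOf_getElem_nodup (canon_nodup hcan i) hzl

theorem stepB_canon (i : Fin m) (b : Bool) (y : Fin k) :
    stepB (ρ.getD i.val []) b (y : ℕ) = (((cond b (σ i) (σ i)⁻¹) y : Fin k) : ℕ) := by
  cases b
  · exact canon_indexOf hcan i y
  · exact canon_getD hcan i y

theorem evalPt_canon (u : List (Fin m × Bool)) (x : Fin k) :
    evalPt ρ u (x : ℕ) = (((FreeGroup.lift σ) (FreeGroup.mk u) x : Fin k) : ℕ) := by
  induction u with
  | nil =>
    show (x : ℕ) = _
    rw [← FreeGroup.one_eq_mk, map_one]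
    rfl
  | cons p u ih =>
    show stepB (ρ.getD p.1.val []) p.2 (evalPt ρ u (x : ℕ)) = _
    rw [ih]
    have hmk : FreeGroup.mk (p :: u) = FreeGroup.mk [p] * FreeGroup.mk u := by
      rw [FreeGroup.mul_mk]; rfl
    have hsingle : FreeGroup.lift σ (FreeGroup.mk [p]) = cond p.2 (σ p.1) (σ p.1)⁻¹ := by
      rw [FreeGroup.lift_mk]
      cases hb : p.2 <;> simp [hb]
    rw [hmk, map_mul, Equiv.Perm.mul_apply, hsingle]
    exact stepB_canon hcan p.1 p.2 ((FreeGroup.lift σ) (FreeGroup.mk u) x)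

end Canon

theorem canon_perm {k : ℕ} (σ' : Equiv.Perm (Fin k)) :
    ((List.finRange k).map (fun x => ((σ' x : ℕ)))).Perm (List.range k) := by
  have h1 : ((List.finRange k).map σ').Perm (List.finRange k) := by
    refine (List.subperm_of_subset ((List.nodup_finRange k).map σ'.injective)
      (fun x _ => List.mem_finRange x)).perm_of_length_le (by simp)
  have h2 := h1.map Fin.val
  rw [List.map_map] at h2
  have h3 : (List.finRange k).map Fin.val = List.range k :=
    List.ext_getElem (by simp) (by intro j h1 h2; simp)
  rw [← h3]
  exact h2




/-- ψ ∘ mk = lift σ when σ i = ψ (of i) -/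
theorem hom_lift_eq {G : Type*} [Group G] {rels : Set (FreeGroup (Fin m))}
    (ψ : PresentedGroup rels →* G) (g : FreeGroup (Fin m)) :
    ψ (PresentedGroup.mk rels g) = FreeGroup.lift (fun i => ψ (PresentedGroup.of i)) g := by
  have h := FreeGroup.ext_hom (ψ.comp (PresentedGroup.mk rels))
    (FreeGroup.lift (fun i => ψ (PresentedGroup.of i))) (fun a => by simp; rfl)
  exact DFunLike.congr_fun h g

theorem mk_rel_eq_one {rels : Set (FreeGroup (Fin m))} {r : FreeGroup (Fin m)} (hr : r ∈ rels) :
    PresentedGroup.mk rels r = 1 :=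
  (QuotientGroup.eq_one_iff r).2 (Subgroup.subset_normalClosure hr)

theorem sideB (rels : Set (FreeGroup (Fin m))) (hrels : rels.Finite)
    (hres : ∀ g : PresentedGroup rels, g ≠ 1 →
      ∃ (H : Type) (_ : Group H) (_ : Finite H) (φ : PresentedGroup rels →* H), φ g ≠ 1)
    (w : List (Fin m × Bool)) :
    (¬ evalWord rels w = 1) ↔ ∃ n, fB (RLof rels hrels) w n = true := by
  constructor
  · -- residual finiteness produces a witness
    intro hne
    obtain ⟨H, hG, hF, φ, hφ⟩ := hres _ hne
    letI := hG
    letI : Fintype H := Fintype.ofFinite H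
    set k := Fintype.card H with hk
    let e : H ≃ Fin k := Fintype.equivFin H
    let π : H →* Equiv.Perm (Fin k) := MonoidHom.mk'
      (fun h => e.permCongr (Equiv.mulLeft h))
      (fun a b => by
        ext x
        simp [Equiv.permCongr_apply, mul_assoc])
    have hπ : ∀ h : H, π h = 1 → h = 1 := by
      intro h hh
      have h1 : (π h) (e 1) = e 1 := by rw [hh]; rfl
      have h2 : (π h) (e 1) = e h := by
        show e.permCongr (Equiv.mulLeft h) (e 1) = e h
        rw [Equiv.permCongr_apply]
        simp
      rw [h2] at h1
      simpa using e.injective h1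
    let ψ : PresentedGroup rels →* Equiv.Perm (Fin k) := π.comp φ
    set σ : Fin m → Equiv.Perm (Fin k) := fun i => ψ (PresentedGroup.of i) with hσ
    set ρ : List (List ℕ) :=
      (List.finRange m).map (fun i => (List.finRange k).map (fun x => ((σ i x : ℕ)))) with hρ
    have hcan : ∀ i : Fin m, ρ.getD i.val [] =
        (List.finRange k).map (fun x => ((σ i x : ℕ))) := by
      intro i
      rw [hρ, List.getD_eq_getElem _ _ (by simpa using i.isLt)]
      simp [List.getElem_finRange]
    have hlift : ∀ g : FreeGroup (Fin m), FreeGroup.lift σ g = ψ (PresentedGroup.mk rels g) :=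
      fun g => (hom_lift_eq ψ g).symm
    have hw : FreeGroup.lift σ (FreeGroup.mk w) ≠ 1 := by
      rw [hlift, ← evalWord_eq]
      intro h1
      exact hφ (hπ _ (by simpa [ψ] using h1))
    obtain ⟨x0, hx0⟩ : ∃ x : Fin k, FreeGroup.lift σ (FreeGroup.mk w) x ≠ x := by
      by_contra hco
      push_neg at hco
      exact hw (Equiv.ext hco)
    refine ⟨Encodable.encode ((k, ρ) : ℕ × List (List ℕ)), ?_⟩
    rw [fB, Encodable.encodek]
    show (_ && _ && _ && _) = true
    rw [Bool.and_eq_true, Bool.and_eq_true, Bool.and_eq_true]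
    refine ⟨⟨⟨?_, ?_⟩, ?_⟩, ?_⟩
    · simp [hρ]
    · rw [foldr_all_iff (fun l => permChk k l)]
      intro l hl
      obtain ⟨i, -, rfl⟩ := List.mem_map.1 hl
      exact (permChk_iff _ _).2 (canon_perm (σ i))
    · rw [foldr_all_iff (fun r =>
        (List.range k).foldr (fun x s' => decide (evalPt ρ r x = x) && s') true)]
      intro r hr
      rw [foldr_all_iff (fun x => decide (evalPt ρ r x = x))]
      intro x hx
      obtain ⟨rel, hrel, rfl⟩ := mem_RLof rels hrels hr
      have hxk : x < k := List.mem_range.1 hx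
      have h1 := evalPt_canon hcan (FreeGroup.toWord rel) ⟨x, hxk⟩
      rw [h1, hlift, FreeGroup.mk_toWord, mk_rel_eq_one hrel, map_one]
      simp
    · rw [foldr_any_iff (fun x => (!decide (evalPt ρ w x = x)))]
      refine ⟨(x0 : ℕ), List.mem_range.2 x0.isLt, ?_⟩
      have h1 := evalPt_canon hcan w x0
      rw [Bool.not_eq_true', decide_eq_false_iff_not]
      rw [h1]
      exact fun hc => hx0 (Fin.val_injective hc)
  · -- a witness certifies non-triviality
    rintro ⟨n, hn⟩ heq
    rw [fB] at hn
    rcases hd : (Encodable.decode (α := ℕ × List (List ℕ)) n) with - | q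
    · rw [hd] at hn; simp at hn
    obtain ⟨k, ρ⟩ := q
    rw [hd] at hn
    simp only [Bool.and_eq_true] at hn
    obtain ⟨⟨⟨hlen, hperm⟩, hrel⟩, hmv⟩ := hn
    rw [decide_eq_true_eq] at hlen
    rw [foldr_all_iff (fun l => permChk k l)] at hperm
    rw [foldr_all_iff (fun r =>
      (List.range k).foldr (fun x s' => decide (evalPt ρ r x = x) && s') true)] at hrel
    rw [foldr_any_iff (fun x => (!decide (evalPt ρ w x = x)))] at hmv
    -- each generator's list is a permutation of `range k`
    have hperm' : ∀ i : Fin m, (ρ.getD i.val []).Perm (List.range k) := by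
      intro i
      have hi : i.val < ρ.length := by rw [hlen]; exact i.isLt
      have : ρ.getD i.val [] ∈ ρ := by
        rw [List.getD_eq_getElem _ _ hi]
        exact List.getElem_mem _
      exact (permChk_iff _ _).1 (hperm _ this)
    have hlength : ∀ i : Fin m, (ρ.getD i.val []).length = k := by
      intro i; simpa using (hperm' i).length_eq
    have hnodup : ∀ i : Fin m, (ρ.getD i.val []).Nodup := by
      intro i; exact (List.Perm.nodup_iff (hperm' i)).2 (List.nodup_range)
    have hlt : ∀ (i : Fin m) (x : Fin k), (ρ.getD i.val []).getD x.val 0 < k := by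
      intro i x
      have hx : x.val < (ρ.getD i.val []).length := by rw [hlength]; exact x.isLt
      rw [List.getD_eq_getElem _ _ hx]
      exact List.mem_range.1 (((hperm' i).mem_iff).1 (List.getElem_mem _))
    let f : Fin m → Fin k → Fin k := fun i x => ⟨(ρ.getD i.val []).getD x.val 0, hlt i x⟩
    have hinj : ∀ i, Function.Injective (f i) := by
      intro i a b hab
      have hA : a.val < (ρ.getD i.val []).length := by rw [hlength]; exact a.isLt
      have hB : b.val < (ρ.getD i.val []).length := by rw [hlength]; exact b.isLt
      have hval : (ρ.getD i.val [])[a.val] = (ρ.getD i.val [])[b.val] := by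
        have h5 : (ρ.getD i.val []).getD a.val 0 = (ρ.getD i.val []).getD b.val 0 :=
          congrArg Fin.val hab
        rwa [List.getD_eq_getElem _ _ hA, List.getD_eq_getElem _ _ hB] at h5
      have h6 : List.idxOf ((ρ.getD i.val [])[a.val]) (ρ.getD i.val []) =
          List.idxOf ((ρ.getD i.val [])[b.val]) (ρ.getD i.val []) := by rw [hval]
      rw [indexOf_getElem_nodup (hnodup i) hA, indexOf_getElem_nodup (hnodup i) hB] at h6
      exact Fin.val_injective h6
    let σ : Fin m → Equiv.Perm (Fin k) :=
      fun i => Equiv.ofBijective (f i) (Finite.injective_iff_bijective.1 (hinj i))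
    have hcan : ∀ i : Fin m, ρ.getD i.val [] =
        (List.finRange k).map (fun x => ((σ i x : ℕ))) := by
      intro i
      apply List.ext_getElem (by rw [hlength i]; simp)
      intro j h1 h2
      rw [List.getElem_map, List.getElem_finRange]
      exact (List.getD_eq_getElem _ _ h1).symm
    have hkill : ∀ r ∈ rels, FreeGroup.lift σ r = 1 := by
      intro r hr
      rw [← FreeGroup.mk_toWord (x := r)]
      apply Equiv.ext
      intro x
      apply Fin.val_injective
      have h1 := (evalPt_canon hcan (FreeGroup.toWord r) x).symm
      rw [h1]
      have h2 := hrel _ (toWord_mem_RLof rels hrels hr)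
      rw [foldr_all_iff (fun x => decide (evalPt ρ (FreeGroup.toWord r) x = x))] at h2
      have h3 := h2 x.val (List.mem_range.2 x.isLt)
      rw [decide_eq_true_eq] at h3
      simpa using h3
    let ψ : PresentedGroup rels →* Equiv.Perm (Fin k) := PresentedGroup.toGroup hkill
    have hψof : ∀ i : Fin m, ψ (PresentedGroup.of i) = σ i := fun i => PresentedGroup.toGroup.of hkill
    have hψmk : ∀ g, ψ (PresentedGroup.mk rels g) = FreeGroup.lift σ g := by
      intro g
      rw [hom_lift_eq ψ g]
      congr 1
    obtain ⟨x, hxr, hx⟩ := hmv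
    rw [Bool.not_eq_true', decide_eq_false_iff_not] at hx
    have hxk : x < k := List.mem_range.1 hxr
    have h1 := evalPt_canon hcan w ⟨x, hxk⟩
    have h2 : FreeGroup.lift σ (FreeGroup.mk w) = 1 := by
      rw [← hψmk, ← evalWord_eq, heq, map_one]
    rw [h2] at h1
    simp at h1
    exact hx h1


theorem rePred_of_exists {α : Type*} [Primcodable α] {p : α → Prop} {f : α → ℕ → Bool}
    (hf : Computable₂ f) (h : ∀ a, p a ↔ ∃ n, f a n = true) : REPred p := by
  have hp : Partrec fun a => Nat.rfind (fun n => Part.some (f a n) : ℕ →. Bool) :=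
    Partrec.rfind hf.partrec₂
  apply hp.dom_re.of_eq
  intro a
  refine (Nat.rfind_dom (p := fun n => Part.some (f a n))).trans ?_
  constructor
  · rintro ⟨n, hn, -⟩
    exact (h a).2 ⟨n, by simpa using hn⟩
  · intro ha
    obtain ⟨n, hn⟩ := (h a).1 ha
    exact ⟨n, by simp [hn], fun {m} _ => trivial⟩


end WPAux

/-- A finitely presented residually finite group has solvable word problem:
the set of words in the generators representing the identity is computable. -/
theorem word_problem_solvable (m : ℕ) (rels : Set (FreeGroup (Fin m)))
    (hrels : rels.Finite)
    (hres : ResiduallyFinite (PresentedGroup rels)) :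
    ComputablePred (fun w : List (Fin m × Bool) => evalWord rels w = 1) := by
  rw [ComputablePred.computable_iff_re_compl_re']
  exact ⟨WPAux.rePred_of_exists (WPAux.comp_fA (WPAux.RLof rels hrels))
      (fun w => WPAux.sideA rels hrels w),
    WPAux.rePred_of_exists (WPAux.comp_fB (WPAux.RLof rels hrels))
      (fun w => WPAux.sideB rels hrels hres w)⟩
end
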